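/- Fix q ∈ (0,1), c ∈ (0,1) and S ∈ (0,1). Then Σ_{j=1}^∞ j · c^j · ( (S;q)_j / (q;q)_j ) · ( (c;q)_∞ / (cS;q)_∞ ) = φ₀(c) − φ₀(cS). (This identifies the mean particle density of the translation invariant stationary distribution φ^{hc}_{c,s²} of the homogeneous half-continuous vertex model, with S = s².) -/

import Mathlib

/-- `φ_n(w) = Σ_{k≥1} k^n w^k/(1-q^k)` as a real function. -/
noncomputable def phiR (q : ℝ) (n : ℕ) (w : ℝ) : ℝ :=
  ∑' k : ℕ, ((k : ℝ) + 1) ^ n * w ^ (k + 1) / (1 - q ^ (k + 1))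

/-- The finite q-Pochhammer symbol `(z;q)_m = Π_{i=0}^{m-1} (1 - z qⁱ)`. -/
noncomputable def qPoch (q z : ℝ) (m : ℕ) : ℝ :=
  ∏ i ∈ Finset.range m, (1 - z * q ^ i)

/-- The infinite q-Pochhammer symbol `(z;q)_∞ = Π_{i=0}^∞ (1 - z qⁱ)`. -/
noncomputable def qPochInf (q z : ℝ) : ℝ :=
  ∏' i : ℕ, (1 - z * q ^ i)


open Finset Filter Topology Real

lemma fac_pos {q z : ℝ} (hq0 : 0 < q) (hq1 : q < 1) (hz0 : 0 ≤ z) (hz1 : z < 1) (i : ℕ) :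
    0 < 1 - z * q ^ i := by
  have h1 : q ^ i ≤ 1 := pow_le_one₀ hq0.le hq1.le
  nlinarith [mul_le_mul_of_nonneg_left h1 hz0]

lemma fac_le_one {q z : ℝ} (hq0 : 0 < q) (hz0 : 0 ≤ z) (i : ℕ) : 1 - z * q ^ i ≤ 1 := by
  nlinarith [mul_nonneg hz0 (pow_nonneg hq0.le i)]

lemma qPoch_pos {q z : ℝ} (hq0 : 0 < q) (hq1 : q < 1) (hz0 : 0 ≤ z) (hz1 : z < 1) (m : ℕ) :
    0 < qPoch q z m :=
  Finset.prod_pos (fun i _ => fac_pos hq0 hq1 hz0 hz1 i)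

lemma qPoch_le_one {q z : ℝ} (hq0 : 0 < q) (hq1 : q < 1) (hz0 : 0 ≤ z) (hz1 : z < 1) (m : ℕ) :
    qPoch q z m ≤ 1 :=
  Finset.prod_le_one (fun i _ => (fac_pos hq0 hq1 hz0 hz1 i).le)
    (fun i _ => fac_le_one hq0 hz0 i)

lemma summable_log_fac {q z : ℝ} (hq0 : 0 < q) (hq1 : q < 1) (hz0 : 0 ≤ z) (hz1 : z < 1) :
    Summable (fun i : ℕ => Real.log (1 - z * q ^ i)) := by
  have hb : ∀ i : ℕ, ‖Real.log (1 - z * q ^ i)‖ ≤ (1 - z)⁻¹ * q ^ i := by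
    intro i
    have hp := fac_pos hq0 hq1 hz0 hz1 (q := q) (z := z) i
    have hle := fac_le_one hq0 hz0 (q := q) (z := z) i
    have hlog : Real.log (1 - z * q ^ i) ≤ 0 := Real.log_nonpos (by linarith) hle
    rw [Real.norm_eq_abs, abs_of_nonpos hlog]
    have h2 : -Real.log (1 - z * q ^ i) = Real.log (1 - z * q ^ i)⁻¹ := by
      rw [Real.log_inv]
    rw [h2]
    have h3 : Real.log (1 - z * q ^ i)⁻¹ ≤ (1 - z * q ^ i)⁻¹ - 1 :=
      Real.log_le_sub_one_of_pos (inv_pos.2 hp)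
    have h4 : (1 - z * q ^ i)⁻¹ - 1 = z * q ^ i / (1 - z * q ^ i) := by
      field_simp
      ring
    have h5 : 1 - z ≤ 1 - z * q ^ i := by
      have h1 : q ^ i ≤ 1 := pow_le_one₀ hq0.le hq1.le
      nlinarith
    have h6 : z * q ^ i / (1 - z * q ^ i) ≤ z * q ^ i / (1 - z) :=
      div_le_div_of_nonneg_left (mul_nonneg hz0 (pow_nonneg hq0.le i)) (by linarith) h5
    have h7 : z * q ^ i / (1 - z) ≤ (1 - z)⁻¹ * q ^ i := by
      rw [div_eq_mul_inv, mul_comm (z * q ^ i) _]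
      have : z * q ^ i ≤ q ^ i := by nlinarith [pow_nonneg hq0.le i]
      exact mul_le_mul_of_nonneg_left this (inv_nonneg.2 (by linarith))
    linarith
  apply Summable.of_norm
  apply Summable.of_nonneg_of_le (fun i => norm_nonneg _) (fun i => (hb i).trans (le_abs_self _))
  apply Summable.abs
  exact (summable_geometric_of_lt_one hq0.le hq1).mul_left _

lemma hasProd_fac {q z : ℝ} (hq0 : 0 < q) (hq1 : q < 1) (hz0 : 0 ≤ z) (hz1 : z < 1) :
    HasProd (fun i : ℕ => 1 - z * q ^ i)
    (Real.exp (∑' i : ℕ, Real.log (1 - z * q ^ i))) := by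
  have hs := (summable_log_fac hq0 hq1 hz0 hz1).hasSum
  unfold HasSum at hs
  unfold HasProd
  have := (Real.continuous_exp.tendsto _).comp hs
  convert this using 2 with s
  rw [Function.comp_apply, Real.exp_sum]
  exact Finset.prod_congr rfl (fun i _ => (Real.exp_log (fac_pos hq0 hq1 hz0 hz1 i)).symm)

lemma multipliable_fac {q z : ℝ} (hq0 : 0 < q) (hq1 : q < 1) (hz0 : 0 ≤ z) (hz1 : z < 1) :
    Multipliable (fun i : ℕ => 1 - z * q ^ i) :=
  ⟨_, hasProd_fac hq0 hq1 hz0 hz1⟩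

lemma qPochInf_pos {q z : ℝ} (hq0 : 0 < q) (hq1 : q < 1) (hz0 : 0 ≤ z) (hz1 : z < 1) :
    0 < qPochInf q z := by
  rw [qPochInf, (hasProd_fac hq0 hq1 hz0 hz1).tprod_eq]
  exact Real.exp_pos _

lemma tendsto_qPoch {q z : ℝ} (hq0 : 0 < q) (hq1 : q < 1) (hz0 : 0 ≤ z) (hz1 : z < 1) :
    Tendsto (fun n => qPoch q z n) atTop (𝓝 (qPochInf q z)) :=
  (multipliable_fac hq0 hq1 hz0 hz1).hasProd.tendsto_prod_nat

noncomputable def aC (q S : ℝ) (j : ℕ) : ℝ := qPoch q S j / qPoch q q j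

noncomputable def Cq (q : ℝ) : ℝ := Real.exp (q / ((1 - q) * (1 - q)))

lemma aC_zero (q S : ℝ) : aC q S 0 = 1 := by simp [aC, qPoch]

lemma aC_pos {q S : ℝ} (hq0 : 0 < q) (hq1 : q < 1) (hS0 : 0 ≤ S) (hS1 : S < 1) (j : ℕ) :
    0 < aC q S j :=
  div_pos (qPoch_pos hq0 hq1 hS0 hS1 j) (qPoch_pos hq0 hq1 hq0.le hq1 j)

lemma geo_sum_le {q : ℝ} (hq0 : 0 < q) (hq1 : q < 1) (m : ℕ) :
    ∑ i ∈ Finset.range m, q ^ i ≤ (1 - q)⁻¹ := by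
  have h := Summable.sum_le_tsum (Finset.range m) (fun i _ => pow_nonneg hq0.le i)
    (summable_geometric_of_lt_one hq0.le hq1)
  rwa [tsum_geometric_of_lt_one hq0.le hq1] at h

lemma qPoch_q_lower {q : ℝ} (hq0 : 0 < q) (hq1 : q < 1) (m : ℕ) :
    Real.exp (-(q / ((1 - q) * (1 - q)))) ≤ qPoch q q m := by
  have h1q : (0:ℝ) < 1 - q := by linarith
  have step : ∀ i : ℕ, Real.exp (-(q * q ^ i) / (1 - q)) ≤ 1 - q * q ^ i := by
    intro i
    have hp := fac_pos hq0 hq1 hq0.le hq1 i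
    have hlog : -(q * q ^ i) / (1 - q * q ^ i) ≤ Real.log (1 - q * q ^ i) := by
      have h3 : Real.log (1 - q * q ^ i)⁻¹ ≤ (1 - q * q ^ i)⁻¹ - 1 :=
        Real.log_le_sub_one_of_pos (inv_pos.2 hp)
      rw [Real.log_inv] at h3
      have h4 : (1 - q * q ^ i)⁻¹ - 1 = q * q ^ i / (1 - q * q ^ i) := by field_simp; ring
      rw [h4] at h3
      rw [neg_div, neg_le]
      linarith
    have hmono : -(q * q ^ i) / (1 - q) ≤ -(q * q ^ i) / (1 - q * q ^ i) := by
      rw [neg_div, neg_div, neg_le_neg_iff]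
      exact div_le_div_of_nonneg_left (by positivity) h1q (by nlinarith [pow_le_one₀ hq0.le hq1.le (n:=i), pow_nonneg hq0.le i])
    calc Real.exp (-(q * q ^ i) / (1 - q)) ≤ Real.exp (Real.log (1 - q * q ^ i)) := by
          apply Real.exp_le_exp.2; linarith
      _ = 1 - q * q ^ i := Real.exp_log hp
  have hsum : ∑ i ∈ Finset.range m, -(q * q ^ i) / (1 - q)
      = (∑ i ∈ Finset.range m, q ^ i) * (-q / (1 - q)) := by
    rw [Finset.sum_mul]
    exact Finset.sum_congr rfl (fun i _ => by ring)
  calc Real.exp (-(q / ((1 - q) * (1 - q))))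
      ≤ Real.exp (∑ i ∈ Finset.range m, -(q * q ^ i) / (1 - q)) := by
        apply Real.exp_le_exp.2
        rw [hsum]
        set G := ∑ i ∈ Finset.range m, q ^ i with hG
        have hg : G ≤ (1 - q)⁻¹ := geo_sum_le hq0 hq1 m
        have hG0 : 0 ≤ G := Finset.sum_nonneg (fun i _ => pow_nonneg hq0.le i)
        have hG1 : G * (1 - q) ≤ 1 := by
          calc G * (1 - q) ≤ (1 - q)⁻¹ * (1 - q) := by nlinarith
            _ = 1 := by field_simp
        have key : G * (-q / (1 - q)) = -(G * q / (1 - q)) := by ring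
        rw [key, neg_le_neg_iff, div_le_div_iff₀ h1q (by positivity)]
        nlinarith [mul_le_mul_of_nonneg_left hG1 (mul_nonneg hq0.le h1q.le)]
      _ = ∏ i ∈ Finset.range m, Real.exp (-(q * q ^ i) / (1 - q)) := by
        rw [← Real.exp_sum]
      _ ≤ ∏ i ∈ Finset.range m, (1 - q * q ^ i) := by
        exact Finset.prod_le_prod (fun i _ => (Real.exp_pos _).le) (fun i _ => step i)
      _ = qPoch q q m := rfl

lemma aC_le {q S : ℝ} (hq0 : 0 < q) (hq1 : q < 1) (hS0 : 0 ≤ S) (hS1 : S < 1) (j : ℕ) :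
    aC q S j ≤ Cq q := by
  have hd := qPoch_q_lower hq0 hq1 j
  have hdpos : 0 < qPoch q q j := qPoch_pos hq0 hq1 hq0.le hq1 j
  have hn1 : qPoch q S j ≤ 1 := qPoch_le_one hq0 hq1 hS0 hS1 j
  have hnn : 0 < qPoch q S j := qPoch_pos hq0 hq1 hS0 hS1 j
  have : aC q S j ≤ 1 / qPoch q q j := by
    rw [aC, div_le_div_iff₀ hdpos hdpos]
    nlinarith
  calc aC q S j ≤ 1 / qPoch q q j := this
    _ ≤ 1 / Real.exp (-(q / ((1 - q) * (1 - q)))) :=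
      one_div_le_one_div_of_le (Real.exp_pos _) hd
    _ = Cq q := by rw [Cq, one_div, ← Real.exp_neg, neg_neg]

lemma aC_rec {q S : ℝ} (hq0 : 0 < q) (hq1 : q < 1) (hS0 : 0 ≤ S) (hS1 : S < 1) (j : ℕ) :
    aC q S (j + 1) * (1 - q ^ (j + 1)) = aC q S j * (1 - S * q ^ j) := by
  have h1 : qPoch q S (j + 1) = qPoch q S j * (1 - S * q ^ j) := Finset.prod_range_succ _ j
  have h2 : qPoch q q (j + 1) = qPoch q q j * (1 - q ^ (j + 1)) := by
    rw [qPoch, Finset.prod_range_succ, ← qPoch]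
    congr 1
    rw [← pow_succ']
  have hd1 : qPoch q q j ≠ 0 := (qPoch_pos hq0 hq1 hq0.le hq1 j).ne'
  have hd2 : qPoch q q (j+1) ≠ 0 := (qPoch_pos hq0 hq1 hq0.le hq1 (j+1)).ne'
  have hq3 : (1 - q ^ (j+1)) ≠ 0 := by
    have : q ^ (j+1) < 1 := pow_lt_one₀ hq0.le hq1 (Nat.succ_ne_zero j)
    linarith
  rw [aC, aC, h1, h2]
  field_simp

noncomputable def hF (q S x : ℝ) : ℝ := ∑' j : ℕ, aC q S j * x ^ j
noncomputable def mF (q S x : ℝ) : ℝ := ∑' j : ℕ, (j:ℝ) * aC q S j * x ^ j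

section Series
variable {q S x : ℝ}

lemma s1 (hq0 : 0 < q) (hq1 : q < 1) (hS0 : 0 ≤ S) (hS1 : S < 1)
    (hx0 : 0 ≤ x) (hx1 : x < 1) : Summable (fun j : ℕ => aC q S j * x ^ j) := by
  apply Summable.of_nonneg_of_le
    (fun j => mul_nonneg (aC_pos hq0 hq1 hS0 hS1 j).le (pow_nonneg hx0 j))
    (fun j => mul_le_mul_of_nonneg_right (aC_le hq0 hq1 hS0 hS1 j) (pow_nonneg hx0 j))
  exact (summable_geometric_of_lt_one hx0 hx1).mul_left _

lemma s2 (hq0 : 0 < q) (hq1 : q < 1) (hS0 : 0 ≤ S) (hS1 : S < 1)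
    (hx0 : 0 ≤ x) (hx1 : x < 1) : Summable (fun j : ℕ => (j:ℝ) * aC q S j * x ^ j) := by
  have hgeo : Summable (fun j : ℕ => Cq q * ((j:ℝ) * x ^ j)) := by
    apply Summable.mul_left
    have := summable_pow_mul_geometric_of_norm_lt_one 1 (r := x)
      (by rwa [Real.norm_eq_abs, abs_of_nonneg hx0])
    simpa using this
  apply Summable.of_nonneg_of_le _ _ hgeo
  · exact fun j => mul_nonneg (mul_nonneg (Nat.cast_nonneg j) (aC_pos hq0 hq1 hS0 hS1 j).le)
      (pow_nonneg hx0 j)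
  · intro j
    have h1 : (j:ℝ) * aC q S j * x ^ j ≤ (j:ℝ) * Cq q * x ^ j := by
      apply mul_le_mul_of_nonneg_right _ (pow_nonneg hx0 j)
      exact mul_le_mul_of_nonneg_left (aC_le hq0 hq1 hS0 hS1 j) (Nat.cast_nonneg j)
    calc (j:ℝ) * aC q S j * x ^ j ≤ (j:ℝ) * Cq q * x ^ j := h1
      _ = Cq q * ((j:ℝ) * x ^ j) := by ring

lemma qx_mem (hq0 : 0 < q) (hq1 : q < 1) (hx0 : 0 < x) (hx1 : x < 1) :
    0 < q * x ∧ q * x < 1 := ⟨mul_pos hq0 hx0, by nlinarith⟩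

lemma hFE (hq0 : 0 < q) (hq1 : q < 1) (hS0 : 0 ≤ S) (hS1 : S < 1)
    (hx0 : 0 < x) (hx1 : x < 1) :
    (1 - x) * hF q S x = (1 - x * S) * hF q S (q * x) := by
  obtain ⟨hqx0, hqx1⟩ := qx_mem hq0 hq1 hx0 hx1
  have s1x := s1 hq0 hq1 hS0 hS1 hx0.le hx1
  have s1qx := s1 hq0 hq1 hS0 hS1 (q := q) (S := S) hqx0.le hqx1
  set f : ℕ → ℝ := fun j => aC q S j * (1 - q ^ j) * x ^ j with hf
  have hfeq : ∀ j, f j = aC q S j * x ^ j - aC q S j * (q * x) ^ j := by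
    intro j; rw [hf]; simp only []; rw [mul_pow]; ring
  have sf : Summable f := by
    apply Summable.congr (s1x.sub s1qx)
    intro j; rw [hfeq j]
  have e1 : hF q S x - hF q S (q * x) = ∑' j, f j := by
    rw [hF, hF, ← Summable.tsum_sub s1x s1qx]
    exact (tsum_congr fun j => (hfeq j).symm)
  have sA : Summable (fun j : ℕ => aC q S j * x ^ (j + 1)) := by
    apply Summable.congr (s1x.mul_left x)
    intro j; rw [pow_succ]; ring
  have sB : Summable (fun j : ℕ => S * (aC q S j * q ^ j) * x ^ (j + 1)) := by
    apply Summable.congr (s1qx.mul_left (x * S))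
    intro j; rw [mul_pow, pow_succ]; ring
  have e2 : x * hF q S x - x * S * hF q S (q * x) = ∑' j, f j := by
    have h1 : x * hF q S x = ∑' j : ℕ, aC q S j * x ^ (j + 1) := by
      rw [hF, ← tsum_mul_left]
      exact tsum_congr fun j => by rw [pow_succ]; ring
    have h2 : x * S * hF q S (q * x) = ∑' j : ℕ, S * (aC q S j * q ^ j) * x ^ (j + 1) := by
      rw [hF, ← tsum_mul_left]
      exact tsum_congr fun j => by rw [mul_pow, pow_succ]; ring
    rw [h1, h2, ← Summable.tsum_sub sA sB]
    have e3 : ∀ j : ℕ, aC q S j * x ^ (j+1) - S * (aC q S j * q ^ j) * x ^ (j+1) = f (j + 1) := by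
      intro j
      have := aC_rec hq0 hq1 hS0 hS1 j
      rw [hf]; simp only []
      calc aC q S j * x ^ (j+1) - S * (aC q S j * q ^ j) * x ^ (j+1)
          = (aC q S j * (1 - S * q ^ j)) * x ^ (j+1) := by ring
        _ = (aC q S (j+1) * (1 - q ^ (j+1))) * x ^ (j+1) := by rw [← this]
    rw [tsum_congr e3]
    have := Summable.tsum_eq_zero_add sf
    rw [this]
    have hf0 : f 0 = 0 := by rw [hf]; simp
    rw [hf0, zero_add]
  nlinarith [e1, e2]

lemma mFE (hq0 : 0 < q) (hq1 : q < 1) (hS0 : 0 ≤ S) (hS1 : S < 1)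
    (hx0 : 0 < x) (hx1 : x < 1) :
    (1 - x) * mF q S x - (1 - x * S) * mF q S (q * x) = hF q S x - hF q S (q * x) := by
  obtain ⟨hqx0, hqx1⟩ := qx_mem hq0 hq1 hx0 hx1
  have s1x := s1 hq0 hq1 hS0 hS1 hx0.le hx1
  have s1qx := s1 hq0 hq1 hS0 hS1 (q := q) (S := S) hqx0.le hqx1
  have s2x := s2 hq0 hq1 hS0 hS1 hx0.le hx1
  have s2qx := s2 hq0 hq1 hS0 hS1 (q := q) (S := S) hqx0.le hqx1
  set f : ℕ → ℝ := fun j => aC q S j * (1 - q ^ j) * x ^ j with hf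
  set g : ℕ → ℝ := fun j => (j:ℝ) * aC q S j * (1 - q ^ j) * x ^ j with hg
  have hfeq : ∀ j, f j = aC q S j * x ^ j - aC q S j * (q * x) ^ j := by
    intro j; rw [hf]; simp only []; rw [mul_pow]; ring
  have hgeq : ∀ j, g j = (j:ℝ) * aC q S j * x ^ j - (j:ℝ) * aC q S j * (q * x) ^ j := by
    intro j; rw [hg]; simp only []; rw [mul_pow]; ring
  have sf : Summable f := by
    apply Summable.congr (s1x.sub s1qx); intro j; rw [hfeq j]
  have sg : Summable g := by
    apply Summable.congr (s2x.sub s2qx); intro j; rw [hgeq j]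
  have e1 : hF q S x - hF q S (q * x) = ∑' j, f j := by
    rw [hF, hF, ← Summable.tsum_sub s1x s1qx]
    exact (tsum_congr fun j => (hfeq j).symm)
  have e1' : mF q S x - mF q S (q * x) = ∑' j, g j := by
    rw [mF, mF, ← Summable.tsum_sub s2x s2qx]
    exact (tsum_congr fun j => (hgeq j).symm)
  have sA : Summable (fun j : ℕ => (j:ℝ) * aC q S j * x ^ (j + 1)) := by
    apply Summable.congr (s2x.mul_left x)
    intro j; rw [pow_succ]; ring
  have sB : Summable (fun j : ℕ => S * ((j:ℝ) * aC q S j * q ^ j) * x ^ (j + 1)) := by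
    apply Summable.congr (s2qx.mul_left (x * S))
    intro j; rw [mul_pow, pow_succ]; ring
  have sfs : Summable (fun j : ℕ => f (j + 1)) := (summable_nat_add_iff 1).2 sf
  have sgs : Summable (fun j : ℕ => g (j + 1)) := (summable_nat_add_iff 1).2 sg
  have e2 : x * mF q S x - x * S * mF q S (q * x) = (∑' j, g j) - ∑' j, f j := by
    have h1 : x * mF q S x = ∑' j : ℕ, (j:ℝ) * aC q S j * x ^ (j + 1) := by
      rw [mF, ← tsum_mul_left]
      exact tsum_congr fun j => by rw [pow_succ]; ring
    have h2 : x * S * mF q S (q * x) = ∑' j : ℕ, S * ((j:ℝ) * aC q S j * q ^ j) * x ^ (j + 1) := by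
      rw [mF, ← tsum_mul_left]
      exact tsum_congr fun j => by rw [mul_pow, pow_succ]; ring
    have e3 : ∀ j : ℕ, (j:ℝ) * aC q S j * x ^ (j+1) - S * ((j:ℝ) * aC q S j * q ^ j) * x ^ (j+1)
        = g (j + 1) - f (j + 1) := by
      intro j
      have hrec := aC_rec hq0 hq1 hS0 hS1 j
      rw [hf, hg]; simp only []
      push_cast
      calc (j:ℝ) * aC q S j * x ^ (j+1) - S * ((j:ℝ) * aC q S j * q ^ j) * x ^ (j+1)
          = (j:ℝ) * (aC q S j * (1 - S * q ^ j)) * x ^ (j+1) := by ring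
        _ = (j:ℝ) * (aC q S (j+1) * (1 - q ^ (j+1))) * x ^ (j+1) := by rw [← hrec]
        _ = ((j:ℝ) + 1) * aC q S (j+1) * (1 - q ^ (j+1)) * x ^ (j+1)
            - aC q S (j+1) * (1 - q ^ (j+1)) * x ^ (j+1) := by ring
    rw [h1, h2, ← Summable.tsum_sub sA sB, tsum_congr e3, Summable.tsum_sub sgs sfs]
    have hgsum := Summable.tsum_eq_zero_add sg
    have hfsum := Summable.tsum_eq_zero_add sf
    have hf0 : f 0 = 0 := by rw [hf]; simp
    have hg0 : g 0 = 0 := by rw [hg]; simp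
    rw [hgsum, hfsum, hf0, hg0]
    ring
  nlinarith [e1, e1', e2]

end Series

noncomputable def pD (q S x : ℝ) : ℝ :=
  ∑' i : ℕ, (x * q ^ i / (1 - x * q ^ i) - x * S * q ^ i / (1 - x * S * q ^ i))

section PD
variable {q S x c : ℝ}

lemma ratio_mono {s t : ℝ} (hs0 : 0 ≤ s) (hst : s ≤ t) (ht1 : t < 1) :
    s / (1 - s) ≤ t / (1 - t) := by
  have h1 : 0 < 1 - t := by linarith
  have h2 : 0 < 1 - s := by linarith
  rw [div_le_div_iff₀ h2 h1]
  nlinarith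

lemma pD_term_nonneg (hq0 : 0 < q) (hq1 : q < 1) (hS0 : 0 ≤ S) (hS1 : S < 1)
    (hx0 : 0 ≤ x) (hx1 : x < 1) (i : ℕ) :
    0 ≤ x * q ^ i / (1 - x * q ^ i) - x * S * q ^ i / (1 - x * S * q ^ i) := by
  have hxq : x * q ^ i ≤ x := by nlinarith [pow_le_one₀ hq0.le hq1.le (n := i), pow_nonneg hq0.le i]
  have hxq1 : x * q ^ i < 1 := lt_of_le_of_lt hxq hx1
  have hmono : (x * S * q ^ i) / (1 - x * S * q ^ i) ≤ (x * q ^ i) / (1 - x * q ^ i) := by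
    apply ratio_mono (by positivity) (by nlinarith [mul_nonneg hx0 (pow_nonneg hq0.le i)]) hxq1
  linarith

lemma pD_term_le (hq0 : 0 < q) (hq1 : q < 1) (hS0 : 0 ≤ S) (hS1 : S < 1)
    (hx0 : 0 ≤ x) (hx1 : x < 1) (i : ℕ) :
    x * q ^ i / (1 - x * q ^ i) - x * S * q ^ i / (1 - x * S * q ^ i)
      ≤ x * (1 - x)⁻¹ * q ^ i := by
  have hxq : x * q ^ i ≤ x := by nlinarith [pow_le_one₀ hq0.le hq1.le (n := i), pow_nonneg hq0.le i]
  have hxq1 : x * q ^ i < 1 := lt_of_le_of_lt hxq hx1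
  have hSnn : 0 ≤ x * S * q ^ i / (1 - x * S * q ^ i) := by
    have hxS : x * S * q ^ i ≤ x := by nlinarith [pow_le_one₀ hq0.le hq1.le (n := i), pow_nonneg hq0.le i]
    have : x * S * q ^ i < 1 := lt_of_le_of_lt hxS hx1
    have h0 : 0 ≤ x * S * q ^ i := by positivity
    have : 0 < 1 - x * S * q ^ i := by linarith
    positivity
  have h2 : x * q ^ i / (1 - x * q ^ i) ≤ x * q ^ i / (1 - x) := by
    apply div_le_div_of_nonneg_left (by positivity) (by linarith) (by linarith)
  have h3 : x * q ^ i / (1 - x) = x * (1 - x)⁻¹ * q ^ i := by ring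
  linarith
lemma spD (hq0 : 0 < q) (hq1 : q < 1) (hS0 : 0 ≤ S) (hS1 : S < 1)
    (hx0 : 0 ≤ x) (hx1 : x < 1) :
    Summable (fun i : ℕ => x * q ^ i / (1 - x * q ^ i) - x * S * q ^ i / (1 - x * S * q ^ i)) := by
  apply Summable.of_nonneg_of_le (pD_term_nonneg hq0 hq1 hS0 hS1 hx0 hx1)
    (pD_term_le hq0 hq1 hS0 hS1 hx0 hx1)
  exact (summable_geometric_of_lt_one hq0.le hq1).mul_left _

lemma pD_nonneg (hq0 : 0 < q) (hq1 : q < 1) (hS0 : 0 ≤ S) (hS1 : S < 1)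
    (hx0 : 0 ≤ x) (hx1 : x < 1) : 0 ≤ pD q S x :=
  tsum_nonneg (pD_term_nonneg hq0 hq1 hS0 hS1 hx0 hx1)

lemma pD_le (hq0 : 0 < q) (hq1 : q < 1) (hS0 : 0 ≤ S) (hS1 : S < 1)
    (hx0 : 0 ≤ x) (hx1 : x < 1) : pD q S x ≤ x * (1 - x)⁻¹ * (1 - q)⁻¹ := by
  have := Summable.tsum_le_tsum (pD_term_le hq0 hq1 hS0 hS1 hx0 hx1)
    (spD hq0 hq1 hS0 hS1 hx0 hx1)
    ((summable_geometric_of_lt_one hq0.le hq1).mul_left (x * (1 - x)⁻¹))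
  rw [tsum_mul_left, tsum_geometric_of_lt_one hq0.le hq1] at this
  exact this.trans (le_of_eq (by ring))

lemma pDFE (hq0 : 0 < q) (hq1 : q < 1) (hS0 : 0 ≤ S) (hS1 : S < 1)
    (hx0 : 0 < x) (hx1 : x < 1) :
    pD q S x = (x / (1 - x) - x * S / (1 - x * S)) + pD q S (q * x) := by
  have h := Summable.tsum_eq_zero_add (spD hq0 hq1 hS0 hS1 hx0.le hx1)
  rw [pD, h]
  congr 1
  · simp
  · rw [pD]
    apply tsum_congr
    intro i
    have e1 : x * q ^ (i + 1) = q * x * q ^ i := by rw [pow_succ']; ring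
    have e2 : x * S * q ^ (i + 1) = q * x * S * q ^ i := by rw [pow_succ']; ring
    rw [e1, e2]

lemma one_le_hF (hq0 : 0 < q) (hq1 : q < 1) (hS0 : 0 ≤ S) (hS1 : S < 1)
    (hx0 : 0 ≤ x) (hx1 : x < 1) : 1 ≤ hF q S x := by
  have h := Summable.le_tsum (s1 hq0 hq1 hS0 hS1 hx0 hx1) 0
    (fun j _ => mul_nonneg (aC_pos hq0 hq1 hS0 hS1 j).le (pow_nonneg hx0 j))
  simpa [aC_zero, hF] using h

lemma hF_le (hq0 : 0 < q) (hq1 : q < 1) (hS0 : 0 ≤ S) (hS1 : S < 1)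
    (hx0 : 0 ≤ x) (hx1 : x < 1) : hF q S x ≤ Cq q * (1 - x)⁻¹ := by
  have := Summable.tsum_le_tsum
    (fun j => mul_le_mul_of_nonneg_right (aC_le hq0 hq1 hS0 hS1 j) (pow_nonneg hx0 j))
    (s1 hq0 hq1 hS0 hS1 hx0 hx1)
    ((summable_geometric_of_lt_one hx0 hx1).mul_left (Cq q))
  rw [tsum_mul_left, tsum_geometric_of_lt_one hx0 hx1] at this
  exact this

lemma hF_sub_one_le (hq0 : 0 < q) (hq1 : q < 1) (hS0 : 0 ≤ S) (hS1 : S < 1)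
    (hx0 : 0 ≤ x) (hx1 : x < 1) :
    hF q S x - 1 ≤ Cq q * (1 - x)⁻¹ * x ∧ 0 ≤ hF q S x - 1 := by
  constructor
  · have s1x := s1 hq0 hq1 hS0 hS1 hx0 hx1
    have h := Summable.tsum_eq_zero_add s1x
    have hT : hF q S x - 1 = ∑' j : ℕ, aC q S (j + 1) * x ^ (j + 1) := by
      rw [hF, h]; simp [aC_zero]
    rw [hT]
    have hb : ∀ j : ℕ, aC q S (j + 1) * x ^ (j + 1) ≤ Cq q * x * x ^ j := by
      intro j
      have h1 : aC q S (j+1) * x ^ (j+1) ≤ Cq q * x ^ (j+1) :=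
        mul_le_mul_of_nonneg_right (aC_le hq0 hq1 hS0 hS1 (j+1)) (pow_nonneg hx0 (j+1))
      calc aC q S (j+1) * x ^ (j+1) ≤ Cq q * x ^ (j+1) := h1
        _ = Cq q * x * x ^ j := by rw [pow_succ]; ring
    have hshift : Summable (fun j : ℕ => aC q S (j + 1) * x ^ (j + 1)) :=
      (summable_nat_add_iff (f := fun j : ℕ => aC q S j * x ^ j) 1).2 s1x
    have := Summable.tsum_le_tsum hb hshift
      ((summable_geometric_of_lt_one hx0 hx1).mul_left (Cq q * x))
    rw [tsum_mul_left, tsum_geometric_of_lt_one hx0 hx1] at this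
    exact this.trans (le_of_eq (by ring))
  · have := one_le_hF hq0 hq1 hS0 hS1 hx0 hx1; linarith

lemma mF_nonneg (hq0 : 0 < q) (hq1 : q < 1) (hS0 : 0 ≤ S) (hS1 : S < 1)
    (hx0 : 0 ≤ x) (hx1 : x < 1) : 0 ≤ mF q S x :=
  tsum_nonneg (fun j => mul_nonneg (mul_nonneg (Nat.cast_nonneg j)
    (aC_pos hq0 hq1 hS0 hS1 j).le) (pow_nonneg hx0 j))

lemma mF_le (hq0 : 0 < q) (hq1 : q < 1) (hS0 : 0 ≤ S) (hS1 : S < 1)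
    (hc0 : 0 < c) (hc1 : c < 1) (hx0 : 0 ≤ x) (hxc : x ≤ c) :
    mF q S x ≤ x * (Cq q / c * ∑' j : ℕ, ((j:ℝ) + 1) * c ^ j) := by
  have hx1 : x < 1 := lt_of_le_of_lt hxc hc1
  have hCq : 0 < Cq q := Real.exp_pos _
  have hsum : Summable (fun j : ℕ => ((j:ℝ) + 1) * c ^ j) := by
    have h1 := summable_pow_mul_geometric_of_norm_lt_one 1 (r := c)
      (by rw [Real.norm_eq_abs, abs_of_nonneg hc0.le]; exact hc1)
    have h2 := summable_geometric_of_lt_one hc0.le hc1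
    apply Summable.congr (h1.add h2)
    intro j; simp; ring
  have hb : ∀ j : ℕ, (j:ℝ) * aC q S j * x ^ j ≤ x * (Cq q / c * (((j:ℝ) + 1) * c ^ j)) := by
    intro j
    cases j with
    | zero => simp; positivity
    | succ k =>
      have hxk : x ^ (k + 1) ≤ x * c ^ k := by
        rw [pow_succ']
        apply mul_le_mul_of_nonneg_left _ hx0
        exact pow_le_pow_left₀ hx0 hxc k
      have haC := aC_le hq0 hq1 hS0 hS1 (k+1)
      have haCp := (aC_pos hq0 hq1 hS0 hS1 (k+1)).le
      have hL : ((k+1 : ℕ):ℝ) * aC q S (k+1) * x ^ (k+1) ≤ ((k:ℝ)+1) * Cq q * (x * c ^ k) := by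
        push_cast
        have h1 : aC q S (k+1) * x ^ (k+1) ≤ Cq q * (x * c ^ k) := by
          calc aC q S (k+1) * x ^ (k+1) ≤ Cq q * x ^ (k+1) :=
              mul_le_mul_of_nonneg_right haC (pow_nonneg hx0 _)
            _ ≤ Cq q * (x * c ^ k) := mul_le_mul_of_nonneg_left hxk hCq.le
        nlinarith [pow_nonneg hx0 (k+1), Nat.cast_nonneg (α := ℝ) k]
      have hR : ((k:ℝ)+1) * Cq q * (x * c ^ k) ≤ x * (Cq q / c * ((((k+1:ℕ):ℝ) + 1) * c ^ (k+1))) := by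
        push_cast
        rw [pow_succ]
        have : x * (Cq q / c * (((k:ℝ) + 1 + 1) * (c ^ k * c))) = ((k:ℝ) + 2) * Cq q * (x * c ^ k) := by
          field_simp; ring
        rw [this]
        nlinarith [pow_nonneg hc0.le k, mul_nonneg hx0 (pow_nonneg hc0.le k), hCq.le]
      exact hL.trans hR
  have := Summable.tsum_le_tsum hb (s2 hq0 hq1 hS0 hS1 hx0 hx1)
    ((hsum.mul_left (Cq q / c)).mul_left x)
  rw [tsum_mul_left, tsum_mul_left] at this
  exact this

end PD

noncomputable def DF (q S x : ℝ) : ℝ := mF q S x - pD q S x * hF q S x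

section Iter
variable {q S c : ℝ}

lemma DFE (hq0 : 0 < q) (hq1 : q < 1) (hS0 : 0 ≤ S) (hS1 : S < 1)
    {x : ℝ} (hx0 : 0 < x) (hx1 : x < 1) :
    (1 - x) * DF q S x = (1 - x * S) * DF q S (q * x) := by
  obtain ⟨hqx0, hqx1⟩ := qx_mem hq0 hq1 hx0 hx1
  have hx : (1 - x) ≠ 0 := by linarith
  have hxS : (1 - x * S) ≠ 0 := by nlinarith
  have h1 := hFE hq0 hq1 hS0 hS1 hx0 hx1
  have h2 := mFE hq0 hq1 hS0 hS1 hx0 hx1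
  have h3 := pDFE hq0 hq1 hS0 hS1 hx0 hx1
  set a := hF q S x
  set a' := hF q S (q * x)
  set M := mF q S x
  set M' := mF q S (q * x)
  set P := pD q S x
  set P' := pD q S (q * x)
  have h3' : (1 - x) * (1 - x * S) * P = x * (1 - x * S) - x * S * (1 - x)
      + (1 - x) * (1 - x * S) * P' := by
    rw [h3]; field_simp
  have key : (1 - x * S) * ((1 - x) * (M - P * a))
      = (1 - x * S) * ((1 - x * S) * (M' - P' * a')) := by
    linear_combination (1 - x * S) * h2 + (-a) * h3' + (1 - (1 - x * S) * P') * h1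
  have := mul_left_cancel₀ hxS key
  show (1 - x) * (M - P * a) = (1 - x * S) * (M' - P' * a')
  exact this

lemma iterate_FE {u : ℝ → ℝ} (hq0 : 0 < q) (hq1 : q < 1) (hc0 : 0 < c) (hc1 : c < 1)
    (hu : ∀ x, 0 < x → x < 1 → (1 - x) * u x = (1 - x * S) * u (q * x)) :
    ∀ N : ℕ, u c * qPoch q c N = u (q ^ N * c) * qPoch q (c * S) N := by
  intro N
  induction N with
  | zero => simp [qPoch]
  | succ N ih =>
    have hqN1 : q ^ N ≤ 1 := pow_le_one₀ hq0.le hq1.le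
    have hqN0 : 0 < q ^ N := pow_pos hq0 N
    have hx0 : 0 < q ^ N * c := mul_pos hqN0 hc0
    have hx1 : q ^ N * c < 1 := by nlinarith
    have hfe := hu (q ^ N * c) hx0 hx1
    have e1 : qPoch q c (N + 1) = qPoch q c N * (1 - c * q ^ N) := Finset.prod_range_succ _ N
    have e2 : qPoch q (c * S) (N + 1) = qPoch q (c * S) N * (1 - c * S * q ^ N) :=
      Finset.prod_range_succ _ N
    have e3 : q * (q ^ N * c) = q ^ (N + 1) * c := by rw [pow_succ]; ring
    rw [e1, e2, ← mul_assoc, ih]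
    rw [← e3]
    have : (1 - c * q ^ N) = (1 - (q ^ N * c)) := by ring
    calc u (q ^ N * c) * qPoch q (c * S) N * (1 - c * q ^ N)
        = ((1 - q ^ N * c) * u (q ^ N * c)) * qPoch q (c * S) N := by ring
      _ = ((1 - q ^ N * c * S) * u (q * (q ^ N * c))) * qPoch q (c * S) N := by rw [hfe]
      _ = u (q * (q ^ N * c)) * (qPoch q (c * S) N * (1 - c * S * q ^ N)) := by ring

lemma limit_FE {u : ℝ → ℝ} {L : ℝ} (hq0 : 0 < q) (hq1 : q < 1) (hS0 : 0 ≤ S) (hS1 : S < 1)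
    (hc0 : 0 < c) (hc1 : c < 1)
    (hu : ∀ x, 0 < x → x < 1 → (1 - x) * u x = (1 - x * S) * u (q * x))
    (hlim : Filter.Tendsto (fun N : ℕ => u (q ^ N * c)) Filter.atTop (nhds L)) :
    u c * qPochInf q c = L * qPochInf q (c * S) := by
  have hcS0 : 0 ≤ c * S := by positivity
  have hcS1 : c * S < 1 := by nlinarith
  have h1 : Filter.Tendsto (fun N : ℕ => u c * qPoch q c N) Filter.atTop
      (nhds (u c * qPochInf q c)) :=
    (tendsto_qPoch hq0 hq1 hc0.le hc1).const_mul (u c)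
  have h2 : Filter.Tendsto (fun N : ℕ => u (q ^ N * c) * qPoch q (c * S) N) Filter.atTop
      (nhds (L * qPochInf q (c * S))) :=
    hlim.mul (tendsto_qPoch hq0 hq1 hcS0 hcS1)
  have h3 := h1.congr (fun N => iterate_FE hq0 hq1 hc0 hc1 hu N)
  exact tendsto_nhds_unique h3 h2

lemma tendsto_xN (hq0 : 0 < q) (hq1 : q < 1) (hc0 : 0 < c) :
    Filter.Tendsto (fun N : ℕ => q ^ N * c) Filter.atTop (nhds 0) := by
  have := tendsto_pow_atTop_nhds_zero_of_lt_one hq0.le hq1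
  simpa using this.mul_const c

lemma xN_mem (hq0 : 0 < q) (hq1 : q < 1) (hc0 : 0 < c) (hc1 : c < 1) (N : ℕ) :
    0 < q ^ N * c ∧ q ^ N * c ≤ c ∧ q ^ N * c < 1 := by
  have h1 : q ^ N ≤ 1 := pow_le_one₀ hq0.le hq1.le
  have h0 : 0 < q ^ N := pow_pos hq0 N
  refine ⟨mul_pos h0 hc0, by nlinarith, by nlinarith⟩

lemma tendsto_hF (hq0 : 0 < q) (hq1 : q < 1) (hS0 : 0 ≤ S) (hS1 : S < 1)
    (hc0 : 0 < c) (hc1 : c < 1) :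
    Filter.Tendsto (fun N : ℕ => hF q S (q ^ N * c)) Filter.atTop (nhds 1) := by
  have hcinv : (0:ℝ) < (1 - c)⁻¹ := by
    have : (0:ℝ) < 1 - c := by linarith
    positivity
  apply tendsto_of_tendsto_of_tendsto_of_le_of_le (g := fun _ : ℕ => (1:ℝ))
    (h := fun N : ℕ => 1 + Cq q * (1 - c)⁻¹ * (q ^ N * c))
  · exact tendsto_const_nhds
  · have := (tendsto_xN hq0 hq1 hc0).const_mul (Cq q * (1 - c)⁻¹)
    have h2 := tendsto_const_nhds (α := ℕ) (f := Filter.atTop) (x := (1:ℝ)) |>.add this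
    simpa using h2
  · intro N
    obtain ⟨hx0, hxc, hx1⟩ := xN_mem hq0 hq1 hc0 hc1 N
    exact one_le_hF hq0 hq1 hS0 hS1 hx0.le hx1
  · intro N
    obtain ⟨hx0, hxc, hx1⟩ := xN_mem hq0 hq1 hc0 hc1 N
    obtain ⟨hub, hlb⟩ := hF_sub_one_le hq0 hq1 hS0 hS1 hx0.le hx1
    have hmono : (1 - (q ^ N * c))⁻¹ ≤ (1 - c)⁻¹ := by
      apply inv_anti₀ (by linarith) (by linarith)
    have : Cq q * (1 - q ^ N * c)⁻¹ * (q ^ N * c) ≤ Cq q * (1 - c)⁻¹ * (q ^ N * c) := by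
      have hCq : (0:ℝ) < Cq q := Real.exp_pos _
      apply mul_le_mul_of_nonneg_right _ hx0.le
      exact mul_le_mul_of_nonneg_left hmono hCq.le
    linarith

lemma qbinomial (hq0 : 0 < q) (hq1 : q < 1) (hS0 : 0 ≤ S) (hS1 : S < 1)
    (hc0 : 0 < c) (hc1 : c < 1) :
    hF q S c * qPochInf q c = qPochInf q (c * S) := by
  have := limit_FE hq0 hq1 hS0 hS1 hc0 hc1
    (fun x hx0 hx1 => hFE hq0 hq1 hS0 hS1 hx0 hx1)
    (tendsto_hF hq0 hq1 hS0 hS1 hc0 hc1)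
  simpa using this

lemma tendsto_DF (hq0 : 0 < q) (hq1 : q < 1) (hS0 : 0 ≤ S) (hS1 : S < 1)
    (hc0 : 0 < c) (hc1 : c < 1) :
    Filter.Tendsto (fun N : ℕ => DF q S (q ^ N * c)) Filter.atTop (nhds 0) := by
  have hc' : (0:ℝ) < 1 - c := by linarith
  have hq' : (0:ℝ) < 1 - q := by linarith
  set Kc : ℝ := Cq q / c * ∑' j : ℕ, ((j:ℝ) + 1) * c ^ j with hKc
  set KD : ℝ := Kc + (1 - c)⁻¹ * (1 - q)⁻¹ * (Cq q * (1 - c)⁻¹) with hKD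
  apply squeeze_zero_norm (a := fun N : ℕ => KD * (q ^ N * c)) (f := fun N : ℕ => DF q S (q ^ N * c))
  · intro N
    obtain ⟨hx0, hxc, hx1⟩ := xN_mem hq0 hq1 hc0 hc1 N
    set x := q ^ N * c
    have hm0 := mF_nonneg hq0 hq1 hS0 hS1 hx0.le hx1
    have hm1 := mF_le hq0 hq1 hS0 hS1 hc0 hc1 hx0.le hxc
    have hp0 := pD_nonneg hq0 hq1 hS0 hS1 hx0.le hx1
    have hp1 := pD_le hq0 hq1 hS0 hS1 hx0.le hx1
    have hh0 : 0 ≤ hF q S x := le_trans zero_le_one (one_le_hF hq0 hq1 hS0 hS1 hx0.le hx1)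
    have hh1 := hF_le hq0 hq1 hS0 hS1 hx0.le hx1
    have hmono : (1 - x)⁻¹ ≤ (1 - c)⁻¹ := inv_anti₀ (by linarith) (by linarith)
    have hP2 : pD q S x ≤ x * (1 - c)⁻¹ * (1 - q)⁻¹ := by
      apply hp1.trans
      have : x * (1 - x)⁻¹ ≤ x * (1 - c)⁻¹ := mul_le_mul_of_nonneg_left hmono hx0.le
      have h1q' : (0:ℝ) ≤ (1 - q)⁻¹ := by positivity
      exact mul_le_mul_of_nonneg_right this h1q'
    have hH2 : hF q S x ≤ Cq q * (1 - c)⁻¹ := by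
      apply hh1.trans
      exact mul_le_mul_of_nonneg_left hmono (Real.exp_pos _).le
    have hprod : pD q S x * hF q S x ≤ (x * (1 - c)⁻¹ * (1 - q)⁻¹) * (Cq q * (1 - c)⁻¹) :=
      mul_le_mul hP2 hH2 hh0 (by positivity)
    rw [Real.norm_eq_abs, abs_le]
    constructor
    · rw [DF]
      have : (x * (1 - c)⁻¹ * (1 - q)⁻¹) * (Cq q * (1 - c)⁻¹)
          = ((1 - c)⁻¹ * (1 - q)⁻¹ * (Cq q * (1 - c)⁻¹)) * x := by ring
      rw [hKD]
      nlinarith [hprod, hm0]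
    · rw [DF, hKD]
      nlinarith [hm1, mul_nonneg hp0 hh0, hx0.le]
  · have := (tendsto_xN hq0 hq1 hc0).const_mul KD
    simpa using this

lemma DF_zero (hq0 : 0 < q) (hq1 : q < 1) (hS0 : 0 ≤ S) (hS1 : S < 1)
    (hc0 : 0 < c) (hc1 : c < 1) : DF q S c = 0 := by
  have h := limit_FE hq0 hq1 hS0 hS1 hc0 hc1
    (fun x hx0 hx1 => DFE hq0 hq1 hS0 hS1 hx0 hx1)
    (tendsto_DF hq0 hq1 hS0 hS1 hc0 hc1)
  rw [zero_mul] at h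
  have hpos := qPochInf_pos hq0 hq1 hc0.le hc1
  have := mul_eq_zero.1 h
  rcases this with h' | h'
  · exact h'
  · exact absurd h' hpos.ne'

end Iter

section Swap
variable {q z : ℝ}

lemma zq_mem (hq0 : 0 < q) (hq1 : q < 1) (hz0 : 0 ≤ z) (hz1 : z < 1) (i : ℕ) :
    0 ≤ z * q ^ i ∧ z * q ^ i < 1 := by
  have h1 : q ^ i ≤ 1 := pow_le_one₀ hq0.le hq1.le
  have h0 : 0 ≤ q ^ i := pow_nonneg hq0.le i
  exact ⟨mul_nonneg hz0 h0, by nlinarith⟩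

lemma geo_shift {t : ℝ} (ht0 : 0 ≤ t) (ht1 : t < 1) :
    ∑' k : ℕ, t ^ (k + 1) = t / (1 - t) := by
  have h : ∑' k : ℕ, t * t ^ k = t * ∑' k : ℕ, t ^ k := tsum_mul_left
  have e : ∀ k : ℕ, t ^ (k + 1) = t * t ^ k := fun k => by rw [pow_succ']
  rw [tsum_congr e, h, tsum_geometric_of_lt_one ht0 ht1, div_eq_mul_inv]

lemma summable_geo_shift {t : ℝ} (ht0 : 0 ≤ t) (ht1 : t < 1) :
    Summable (fun k : ℕ => t ^ (k + 1)) := by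
  apply Summable.congr ((summable_geometric_of_lt_one ht0 ht1).mul_left t)
  intro k; rw [pow_succ']

lemma summable_ratio (hq0 : 0 < q) (hq1 : q < 1) (hz0 : 0 ≤ z) (hz1 : z < 1) :
    Summable (fun i : ℕ => z * q ^ i / (1 - z * q ^ i)) := by
  refine Summable.of_nonneg_of_le ?_ ?_
    (((summable_geometric_of_lt_one hq0.le hq1).mul_left (z * (1 - z)⁻¹)))
  · intro i
    obtain ⟨h0, h1⟩ := zq_mem hq0 hq1 hz0 hz1 i
    have : 0 < 1 - z * q ^ i := by linarith
    positivity
  · intro i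
    obtain ⟨h0, h1⟩ := zq_mem hq0 hq1 hz0 hz1 i
    have hle : z * q ^ i ≤ z := by nlinarith [pow_le_one₀ hq0.le hq1.le (n := i), pow_nonneg hq0.le i]
    have h2 : z * q ^ i / (1 - z * q ^ i) ≤ z * q ^ i / (1 - z) :=
      div_le_div_of_nonneg_left h0 (by linarith) (by linarith)
    calc z * q ^ i / (1 - z * q ^ i) ≤ z * q ^ i / (1 - z) := h2
      _ = z * (1 - z)⁻¹ * q ^ i := by ring

lemma tsum_ratio_eq (hq0 : 0 < q) (hq1 : q < 1) (hz0 : 0 ≤ z) (hz1 : z < 1) :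
    ∑' i : ℕ, z * q ^ i / (1 - z * q ^ i) = ∑' k : ℕ, z ^ (k + 1) / (1 - q ^ (k + 1)) := by
  set f : ℕ → ℕ → ℝ := fun i k => (z * q ^ i) ^ (k + 1) with hfdef
  have hmem := zq_mem hq0 hq1 hz0 hz1
  have hqk : ∀ k : ℕ, 0 ≤ q ^ (k + 1) ∧ q ^ (k + 1) < 1 := fun k =>
    ⟨pow_nonneg hq0.le _, pow_lt_one₀ hq0.le hq1 (Nat.succ_ne_zero k)⟩
  have h₁ : ∀ i, Summable (f i) := fun i =>
    summable_geo_shift (hmem i).1 (hmem i).2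
  have hcol : ∀ i : ℕ, ∑' k, f i k = z * q ^ i / (1 - z * q ^ i) := fun i =>
    geo_shift (hmem i).1 (hmem i).2
  have h₂ : ∀ k, Summable (fun i => f i k) := by
    intro k
    apply Summable.congr ((summable_geometric_of_lt_one (hqk k).1 (hqk k).2).mul_left (z ^ (k + 1)))
    intro i
    rw [hfdef]
    simp only []
    rw [mul_pow, ← pow_mul, ← pow_mul, Nat.mul_comm]
  have huncurry : Summable (Function.uncurry f) := by
    refine (summable_prod_of_nonneg ?_).2 ⟨fun i => h₁ i, ?_⟩
    · intro p
      exact pow_nonneg (hmem p.1).1 _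
    · apply Summable.congr (summable_ratio hq0 hq1 hz0 hz1)
      intro i
      exact (hcol i).symm
  have hswap := Summable.tsum_comm' huncurry h₁ h₂
  calc ∑' i : ℕ, z * q ^ i / (1 - z * q ^ i)
      = ∑' i : ℕ, ∑' k : ℕ, f i k := (tsum_congr fun i => (hcol i).symm)
    _ = ∑' k : ℕ, ∑' i : ℕ, f i k := hswap.symm
    _ = ∑' k : ℕ, z ^ (k + 1) / (1 - q ^ (k + 1)) := by
        apply tsum_congr
        intro k
        have e : ∀ i : ℕ, f i k = z ^ (k + 1) * (q ^ (k + 1)) ^ i := by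
          intro i
          rw [hfdef]
          simp only []
          rw [mul_pow, ← pow_mul, ← pow_mul, Nat.mul_comm]
        rw [tsum_congr e, tsum_mul_left, tsum_geometric_of_lt_one (hqk k).1 (hqk k).2,
          div_eq_mul_inv]

end Swap

lemma pD_eq_phiR {q S c : ℝ} (hq0 : 0 < q) (hq1 : q < 1) (hS0 : 0 ≤ S) (hS1 : S < 1)
    (hc0 : 0 < c) (hc1 : c < 1) :
    pD q S c = (∑' k : ℕ, c ^ (k + 1) / (1 - q ^ (k + 1)))
      - ∑' k : ℕ, (c * S) ^ (k + 1) / (1 - q ^ (k + 1)) := by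
  have hcS0 : 0 ≤ c * S := by positivity
  have hcS1 : c * S < 1 := by nlinarith
  have sA := summable_ratio hq0 hq1 hc0.le hc1
  have sB := summable_ratio hq0 hq1 hcS0 hcS1
  rw [pD, Summable.tsum_sub sA sB, tsum_ratio_eq hq0 hq1 hc0.le hc1, tsum_ratio_eq hq0 hq1 hcS0 hcS1]

theorem stmt_19 (q c S : ℝ) (hq : q ∈ Set.Ioo (0:ℝ) 1) (hc : c ∈ Set.Ioo (0:ℝ) 1)
    (hS : S ∈ Set.Ioo (0:ℝ) 1) :
    ∑' j : ℕ, (j : ℝ) * c ^ j * (qPoch q S j / qPoch q q j) *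
        (qPochInf q c / qPochInf q (c * S))
      = phiR q 0 c - phiR q 0 (c * S) := by
  obtain ⟨hq0, hq1⟩ := hq
  obtain ⟨hc0, hc1⟩ := hc
  obtain ⟨hS0, hS1⟩ := hS
  have hS0' : (0:ℝ) ≤ S := hS0.le
  have e1 : ∀ j : ℕ, (j : ℝ) * c ^ j * (qPoch q S j / qPoch q q j) *
      (qPochInf q c / qPochInf q (c * S))
      = ((j : ℝ) * aC q S j * c ^ j) * (qPochInf q c / qPochInf q (c * S)) := by
    intro j; rw [aC]; ring
  rw [tsum_congr e1, tsum_mul_right]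
  have hqb := qbinomial hq0 hq1 hS0' hS1 hc0 hc1
  have hD := DF_zero hq0 hq1 hS0' hS1 hc0 hc1
  have hmf : mF q S c = pD q S c * hF q S c := by rw [DF] at hD; linarith
  have hPc := qPochInf_pos hq0 hq1 hc0.le hc1
  have hhF : (0:ℝ) < hF q S c :=
    lt_of_lt_of_le zero_lt_one (one_le_hF hq0 hq1 hS0' hS1 hc0.le hc1)
  have key : mF q S c * (qPochInf q c / qPochInf q (c * S)) = pD q S c := by
    rw [hmf, ← hqb]
    field_simp
  have hfinal : (∑' j : ℕ, (j : ℝ) * aC q S j * c ^ j) * (qPochInf q c / qPochInf q (c * S))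
      = pD q S c := key
  rw [hfinal, pD_eq_phiR hq0 hq1 hS0' hS1 hc0 hc1]
  have ephi : ∀ w : ℝ, phiR q 0 w = ∑' k : ℕ, w ^ (k + 1) / (1 - q ^ (k + 1)) := by
    intro w
    rw [phiR]
    exact tsum_congr fun k => by rw [pow_zero, one_mul]
  rw [ephi, ephi]
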